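/- Let X be a compact Hausdorff connected topological space and let 𝒜 be a finite open cover of X with at least two members that admits no proper subcover, such that every member of 𝒜 has finite frontier. Let L be the cardinality of the union of the frontiers of the members of 𝒜. Then for every n ≥ 1 and all homeomorphisms s_0, …, s_{n-1} of X, the open cover {s_0(A_0) ∩ … ∩ s_{n-1}(A_{n-1}) : A_0, …, A_{n-1} ∈ 𝒜} of X admits a subcover of cardinality at most n·L. -/

import Mathlib

/-- Frontier of a finite intersection is contained in the union of the frontiers. -/
lemma frontier_iInter_subset_aux {X : Type*} [TopologicalSpace X] :
    ∀ (n : ℕ) (t : Fin n → Set X), frontier (⋂ i, t i) ⊆ ⋃ i, frontier (t i) := by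
  intro n
  induction n with
  | zero => intro t; simp
  | succ m ih =>
      intro t
      have hsplit : (⋂ i, t i) = t 0 ∩ ⋂ i : Fin m, t i.succ := by
        ext x
        simp only [Set.mem_iInter, Set.mem_inter_iff]
        constructor
        · intro h; exact ⟨h 0, fun i => h i.succ⟩
        · rintro ⟨h0, h⟩ i
          induction i using Fin.cases with
          | zero => exact h0
          | succ j => exact h j
      rw [hsplit]
      intro x hx
      rcases frontier_inter_subset _ _ hx with h | h
      · exact Set.mem_iUnion.2 ⟨0, h.1⟩
      · rcases Set.mem_iUnion.1 (ih (fun i => t i.succ) h.2) with ⟨j, hj⟩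
        exact Set.mem_iUnion.2 ⟨j.succ, hj⟩

/-- Frontier of a finite sUnion is contained in the union of the frontiers. -/
lemma frontier_sUnion_subset_aux {X : Type*} [TopologicalSpace X] {S : Set (Set X)}
    (hS : S.Finite) : frontier (⋃₀ S) ⊆ ⋃ A ∈ S, frontier A := by
  refine Set.Finite.induction_on (motive := fun S _ => frontier (⋃₀ S) ⊆ ⋃ A ∈ S, frontier A) S hS ?_ ?_
  · simp
  · intro a S' _ _ ih
    rw [Set.sUnion_insert]
    intro x hx
    rcases frontier_union_subset _ _ hx with h | h
    · exact Set.mem_biUnion (Set.mem_insert _ _) h.1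
    · rcases Set.mem_iUnion₂.1 (ih h.2) with ⟨A, hA, hxA⟩
      exact Set.mem_biUnion (Set.mem_insert_of_mem _ hA) hxA

/-- Let `𝒜` be a finite minimal open cover (with at least two members) of a
continuum `X`, each of whose members has finite frontier, and let `L` be the total number of
boundary points of members of `𝒜`.  Then for every `n ≥ 1` and homeomorphisms
`s₀, …, s_{n-1}` of `X`, the cover `⋁_{i<n} s_i(𝒜)` admits a subcover of cardinality `≤ n·L`. -/
theorem stmt_2 {X : Type*} [TopologicalSpace X] [CompactSpace X] [T2Space X] [ConnectedSpace X]
    (𝒜 : Set (Set X)) (hfin : 𝒜.Finite) (hopen : ∀ A ∈ 𝒜, IsOpen A)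
    (hcov : ⋃₀ 𝒜 = Set.univ)
    (htwo : ∃ A ∈ 𝒜, ∃ B ∈ 𝒜, A ≠ B)
    (hmin : ∀ 𝓑 ⊆ 𝒜, ⋃₀ 𝓑 = Set.univ → 𝓑 = 𝒜)
    (hbd : ∀ A ∈ 𝒜, (frontier A).Finite)
    (L : ℕ) (hL : (⋃ A ∈ 𝒜, frontier A).ncard = L)
    (n : ℕ) (hn : 1 ≤ n) (s : Fin n → X ≃ₜ X) :
    ∃ 𝓑 : Set (Set X),
      (∀ B ∈ 𝓑, ∃ f : Fin n → Set X, (∀ i, f i ∈ 𝒜) ∧ B = ⋂ i, (s i) '' (f i)) ∧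
      ⋃₀ 𝓑 = Set.univ ∧ 𝓑.Finite ∧ 𝓑.ncard ≤ n * L := by
  classical
  set F : Set X := ⋃ A ∈ 𝒜, frontier A with hF
  have hFfin : F.Finite := Set.Finite.biUnion hfin hbd
  set Y : Set X := ⋃ i : Fin n, (s i) '' F with hY
  have hYfin : Y.Finite := Set.finite_iUnion fun i => hFfin.image _
  -- every point of X lies in a member of 𝒜
  have hmem : ∀ x : X, ∃ A ∈ 𝒜, x ∈ A := by
    intro x
    have : x ∈ ⋃₀ 𝒜 := by rw [hcov]; trivial
    exact this
  -- choice of members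
  choose g hg𝒜 hgmem using hmem
  -- for each point y, a member of the refined cover containing y
  set f : X → Fin n → Set X := fun y i => g ((s i).symm y) with hf
  set B : X → Set X := fun y => ⋂ i, (s i) '' (f y i) with hB
  have hf𝒜 : ∀ y i, f y i ∈ 𝒜 := fun y i => hg𝒜 _
  have hyB : ∀ y, y ∈ B y := by
    intro y
    refine Set.mem_iInter.2 fun i => ⟨(s i).symm y, hgmem _, ?_⟩
    simp
  refine ⟨B '' Y, ?_, ?_, hYfin.image _, ?_⟩
  · rintro C ⟨y, _, rfl⟩
    exact ⟨f y, hf𝒜 y, rfl⟩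
  · -- covering: ⋃₀ (B '' Y) = univ
    set U : Set X := ⋃₀ (B '' Y) with hU
    have hUopen : IsOpen U := by
      refine isOpen_sUnion ?_
      rintro C ⟨y, _, rfl⟩
      exact isOpen_iInter_of_finite fun i =>
        (s i).isOpenMap _ (hopen _ (hf𝒜 y i))
    have hYU : Y ⊆ U := fun y hy => Set.mem_sUnion.2 ⟨B y, ⟨y, hy, rfl⟩, hyB y⟩
    -- frontier of U is contained in Y
    have hfr : frontier U ⊆ Y := by
      intro x hx
      rcases Set.mem_iUnion₂.1 (frontier_sUnion_subset_aux (hYfin.image B) hx) with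
        ⟨C, ⟨y, _, rfl⟩, hxC⟩
      rcases Set.mem_iUnion.1 (frontier_iInter_subset_aux n (fun i => (s i) '' (f y i)) hxC)
        with ⟨i, hi⟩
      rw [← (s i).image_frontier] at hi
      rcases hi with ⟨z, hz, rfl⟩
      exact Set.mem_iUnion.2 ⟨i, ⟨z, Set.mem_biUnion (hf𝒜 y i) hz, rfl⟩⟩
    have hclopen : IsClopen U := by
      rw [isClopen_iff_frontier_eq_empty]
      by_contra h
      rcases Set.nonempty_iff_ne_empty.2 h with ⟨x, hx⟩
      have hxU : x ∈ U := hYU (hfr hx)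
      exact (disjoint_frontier_iff_isOpen.mpr hUopen).ne_of_mem hx hxU rfl
    -- Y is nonempty
    have hYne : Y.Nonempty := by
      obtain ⟨A, hA, Bb, hBb, hAB⟩ := htwo
      have hfrA : (frontier A).Nonempty := by
        rw [Set.nonempty_iff_ne_empty]
        intro hfe
        have hclA : IsClopen A := isClopen_iff_frontier_eq_empty.2 hfe
        rcases isClopen_iff.1 hclA with rfl | rfl
        · -- A = ∅ : drop it from the cover
          have hsub : 𝒜 \ {(∅ : Set X)} ⊆ 𝒜 := Set.diff_subset
          have hcov' : ⋃₀ (𝒜 \ {(∅ : Set X)}) = Set.univ := by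
            rw [← hcov]
            ext x
            simp only [Set.mem_sUnion, Set.mem_diff, Set.mem_singleton_iff]
            constructor
            · rintro ⟨t, ⟨ht, _⟩, hx⟩; exact ⟨t, ht, hx⟩
            · rintro ⟨t, ht, hx⟩
              refine ⟨t, ⟨ht, ?_⟩, hx⟩
              rintro rfl; exact hx
          have heq := hmin _ hsub hcov'
          have h2 : (∅ : Set X) ∈ 𝒜 \ {(∅ : Set X)} := by rw [heq]; exact hA
          exact h2.2 rfl
        · -- A = univ : {A} is a proper subcover
          have hsub : {(Set.univ : Set X)} ⊆ 𝒜 := by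
            simpa using hA
          have hcov' : ⋃₀ {(Set.univ : Set X)} = Set.univ := by simp
          have h1 := hmin _ hsub hcov'
          have h2 : Bb ∈ ({(Set.univ : Set X)} : Set (Set X)) := by rw [h1]; exact hBb
          exact hAB (Set.mem_singleton_iff.1 h2).symm
      obtain ⟨x, hx⟩ := hfrA
      have hxF : x ∈ F := Set.mem_biUnion hA hx
      exact ⟨(s ⟨0, hn⟩) x, Set.mem_iUnion.2 ⟨⟨0, hn⟩, ⟨x, hxF, rfl⟩⟩⟩
    rcases isClopen_iff.1 hclopen with h | h
    · exact absurd (hYU hYne.choose_spec) (h ▸ id)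
    · exact h
  · -- cardinality bound
    have hcard : Y.ncard ≤ n * L := by
      have h1 : Y = ↑(Finset.univ.biUnion fun i : Fin n => (hFfin.image (s i)).toFinset) := by
        rw [hY]
        simp [Set.Finite.coe_toFinset]
      have h2 : Y.ncard ≤ ∑ i : Fin n, ((hFfin.image (s i)).toFinset).card := by
        rw [h1, Set.ncard_coe_finset]
        exact Finset.card_biUnion_le
      have h3 : ∀ i : Fin n, ((hFfin.image (s i)).toFinset).card = L := by
        intro i
        rw [← Set.ncard_coe_finset, Set.Finite.coe_toFinset,
          Set.ncard_image_of_injective _ (s i).injective, hL]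
      calc Y.ncard ≤ ∑ i : Fin n, ((hFfin.image (s i)).toFinset).card := h2
        _ = ∑ _i : Fin n, L := by simp [h3]
        _ = n * L := by simp [Finset.sum_const, mul_comm]
    exact le_trans (Set.ncard_image_le hYfin) hcard
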